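/- Let t > 0 and α ≥ 1 be real numbers. Then sinh(αt) ≥ (sinh t)^{1/α}·(sinh((α+1)t))^{(α−1)/α} and sinh(αt) ≥ (sinh t)^{2/(α+1)}·(sinh((α+2)t))^{(α−1)/(α+1)}. -/

import Mathlib

open Real Set

lemma logsinh_concave : ConcaveOn ℝ (Set.Ioi (0:ℝ)) (fun x => Real.log (Real.sinh x)) := by
  have hcont : ContinuousOn (fun x => Real.log (Real.sinh x)) (Set.Ioi (0:ℝ)) :=
    Real.continuous_sinh.continuousOn.log (fun x hx => (Real.sinh_pos_iff.2 hx).ne')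
  refine (strictConcaveOn_of_deriv2_neg (convex_Ioi (0:ℝ)) hcont ?_).concaveOn
  intro x hx
  rw [interior_Ioi] at hx
  have hx : (0:ℝ) < x := hx
  have hsne : ∀ y ∈ Set.Ioi (0:ℝ), Real.sinh y ≠ 0 := fun y hy => (Real.sinh_pos_iff.2 hy).ne'
  have hd1 : ∀ y ∈ Set.Ioi (0:ℝ),
      HasDerivAt (fun z => Real.log (Real.sinh z)) (Real.cosh y / Real.sinh y) y := by
    intro y hy
    simpa using (Real.hasDerivAt_sinh y).log (hsne y hy)
  have heq : deriv (fun z => Real.log (Real.sinh z)) =ᶠ[nhds x]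
      (fun y => Real.cosh y / Real.sinh y) := by
    filter_upwards [Ioi_mem_nhds hx] with y hy
    exact (hd1 y hy).deriv
  show deriv (deriv (fun z => Real.log (Real.sinh z))) x < 0
  rw [heq.deriv_eq]
  have hsx : Real.sinh x ≠ 0 := hsne x hx
  have hd2 : HasDerivAt (fun y => Real.cosh y / Real.sinh y)
      ((Real.sinh x * Real.sinh x - Real.cosh x * Real.cosh x) / Real.sinh x ^ 2) x :=
    (Real.hasDerivAt_cosh x).div (Real.hasDerivAt_sinh x) hsx
  rw [hd2.deriv]
  have hid : Real.cosh x ^ 2 - Real.sinh x ^ 2 = 1 := Real.cosh_sq_sub_sinh_sq x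
  have hs2 : (0:ℝ) < Real.sinh x ^ 2 := by positivity
  apply div_neg_of_neg_of_pos _ hs2
  nlinarith

lemma sinh_comb (x y w1 w2 : ℝ) (hx : 0 < x) (hy : 0 < y) (h1 : 0 ≤ w1) (h2 : 0 ≤ w2)
    (hs : w1 + w2 = 1) :
    Real.sinh x ^ w1 * Real.sinh y ^ w2 ≤ Real.sinh (w1 * x + w2 * y) := by
  have hc := logsinh_concave.2 (Set.mem_Ioi.2 hx) (Set.mem_Ioi.2 hy) h1 h2 hs
  simp only [smul_eq_mul] at hc
  have hcomb : 0 < w1 * x + w2 * y := by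
    rcases eq_or_lt_of_le h1 with h | h
    · have hw2 : w2 = 1 := by linarith
      simp [← h, hw2, hy]
    · nlinarith
  have hsx : 0 < Real.sinh x := Real.sinh_pos_iff.2 hx
  have hsy : 0 < Real.sinh y := Real.sinh_pos_iff.2 hy
  have hsc : 0 < Real.sinh (w1 * x + w2 * y) := Real.sinh_pos_iff.2 hcomb
  rw [Real.rpow_def_of_pos hsx, Real.rpow_def_of_pos hsy, ← Real.exp_add,
    ← Real.exp_log hsc]
  exact Real.exp_le_exp.2 (by linarith)

/-- Inequalities (+) and (++) in the proof of the Proposition of Section 3,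
from the concavity of log ∘ sinh. -/
theorem stmt12 (t α : ℝ) (ht : 0 < t) (hα : 1 ≤ α) :
    Real.sinh (α * t) ≥
      Real.sinh t ^ (1 / α) * Real.sinh ((α + 1) * t) ^ ((α - 1) / α) ∧
    Real.sinh (α * t) ≥
      Real.sinh t ^ (2 / (α + 1)) * Real.sinh ((α + 2) * t) ^ ((α - 1) / (α + 1)) := by
  have hα0 : (0:ℝ) < α := lt_of_lt_of_le one_pos hα
  constructor
  · have h := sinh_comb t ((α + 1) * t) (1 / α) ((α - 1) / α) ht
      (by positivity) (by positivity) (div_nonneg (by linarith) (by linarith)) (by field_simp; ring)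
    have he : 1 / α * t + (α - 1) / α * ((α + 1) * t) = α * t := by
      field_simp; ring
    rwa [he] at h
  · have hα1 : (0:ℝ) < α + 1 := by linarith
    have h := sinh_comb t ((α + 2) * t) (2 / (α + 1)) ((α - 1) / (α + 1)) ht
      (by positivity) (by positivity) (div_nonneg (by linarith) (by linarith))
      (by field_simp; ring)
    have he : 2 / (α + 1) * t + (α - 1) / (α + 1) * ((α + 2) * t) = α * t := by
      field_simp; ring
    rwa [he] at h
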